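/- Let O be a monotonous quiver all of whose vertices are phylogenetic, and let A be a regular vertex of O. Then the clade O_A of A is monotonous and every vertex of O_A is phylogenetic as a vertex of O_A. -/

import Mathlib

universe u
variable {V : Type u} [Quiver V]

/-- An evolution of length `m` with vertex sequence `A 0, A 1, ..., A m`:
for each `k < m` there is an edge from `A (k+1)` to `A k`
(the paper's evolution `A 0 ← A 1 ← ⋯ ← A m`). -/
def IsEvol (A : ℕ → V) (m : ℕ) : Prop := ∀ k < m, Nonempty (A (k + 1) ⟶ A k)

/-- `Anc X Y` : `X` is an ancestor of `Y`, i.e. there is an evolution from `X` to `Y`. -/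
def Anc (X Y : V) : Prop := ∃ (m : ℕ) (A : ℕ → V), IsEvol A m ∧ A 0 = X ∧ A m = Y

/-- `X` and `Y` are isotypic. -/
def Isotypic (X Y : V) : Prop := Anc X Y ∧ Anc Y X

/-- A vertex is primitive if every ancestor of it is isotypic to it. -/
def Primitive (X : V) : Prop := ∀ B : V, Anc B X → Anc X B

/-- A full evolution for `X` : an evolution from a primitive vertex to `X`. -/
def IsFullEvol (A : ℕ → V) (m : ℕ) (X : V) : Prop :=
  IsEvol A m ∧ Primitive (A 0) ∧ A m = X

/-- The height of a vertex: the least length of a full evolution for it (`⊤` if none). -/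
noncomputable def height (X : V) : ℕ∞ :=
  sInf {n : ℕ∞ | ∃ m : ℕ, n = (m : ℕ∞) ∧ ∃ A : ℕ → V, IsFullEvol A m X}

/-- `A` is a critical ancestor of `B`. -/
def CritAnc (A B : V) : Prop :=
  height A < ⊤ ∧ ∃ (m : ℕ) (E : ℕ → V), 0 < m ∧ IsEvol E m ∧ E 0 = A ∧ E m = B ∧
    height (E 1) = height A + 1

/-- A vertex is normal if any two of its critical ancestors of equal height are isotypic. -/
def NormalVtx (B : V) : Prop :=
  ∀ A A' : V, CritAnc A B → CritAnc A' B → height A = height A' → Isotypic A A'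

/-- The evolution `(A, m)` embeds in the evolution `(B, n)`. -/
def Embeds (A : ℕ → V) (m : ℕ) (B : ℕ → V) (n : ℕ) : Prop :=
  m ≤ n ∧ ∃ r : ℕ → ℕ, (∀ k < m, r k < r (k + 1)) ∧ r m ≤ n ∧
    ∀ k ≤ m, Isotypic (A k) (B (r k))

/-- A universal evolution for `X`: a full evolution for `X` embedding in every
full evolution for `X`. -/
def IsUniversalEvol (A : ℕ → V) (m : ℕ) (X : V) : Prop :=
  IsFullEvol A m X ∧ ∀ (B : ℕ → V) (n : ℕ), IsFullEvol B n X → Embeds A m B n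

/-- A vertex is phylogenetic if it admits a universal evolution. -/
def Phylogenetic (X : V) : Prop := ∃ (A : ℕ → V) (m : ℕ), IsUniversalEvol A m X

/-- A quiver is monotonous if `h(A) ≥ h(B)` for every edge `A → B`. -/
def Monotonous (V : Type u) [Quiver V] : Prop :=
  ∀ A B : V, Nonempty (A ⟶ B) → height B ≤ height A

/-- A vertex `A` is regular if for every descendant `B` of `A` with `h(B) = h(A)`
there is an edge `B → A`. -/
def Regular (A : V) : Prop :=
  ∀ B : V, Anc A B → height B = height A → Nonempty (B ⟶ A)

/-- The clade of a vertex `A`: the full subquiver of descendants of `A`. -/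
abbrev Clade (A : V) : Type u := {B : V // Anc A B}

instance (A : V) : Quiver (Clade A) := ⟨fun X Y => X.val ⟶ Y.val⟩

set_option linter.unusedSectionVars false
set_option linter.unusedVariables false
section AuxLemmas
variable {V : Type u} [Quiver V]

lemma isEvol_prefix {A : ℕ → V} {m k : ℕ} (h : IsEvol A m) (hk : k ≤ m) : IsEvol A k :=
  fun j hj => h j (lt_of_lt_of_le hj hk)

lemma anc_refl (X : V) : Anc X X :=
  ⟨0, fun _ => X, fun k hk => absurd hk (Nat.not_lt_zero k), rfl, rfl⟩

lemma anc_segment {A : ℕ → V} {m : ℕ} (h : IsEvol A m) {i j : ℕ} (hij : i ≤ j) (hj : j ≤ m) :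
    Anc (A i) (A j) := by
  refine ⟨j - i, fun k => A (i + k), ?_, by simp, by show A (i+(j-i)) = A j; rw [Nat.add_sub_cancel' hij]⟩
  intro k hk
  exact h (i + k) (by omega)

lemma anc_of_hom {X Y : V} (h : Nonempty (X ⟶ Y)) : Anc Y X := by
  refine ⟨1, fun k => if k = 0 then Y else X, ?_, by simp, by simp⟩
  intro k hk
  interval_cases k
  simpa using h

/-- Concatenation of evolutions. -/
def evCat (A : ℕ → V) (m : ℕ) (B : ℕ → V) : ℕ → V :=
  fun i => if i ≤ m then A i else B (i - m)

lemma evCat_le {A : ℕ → V} {m : ℕ} {B : ℕ → V} {i : ℕ} (h : i ≤ m) : evCat A m B i = A i :=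
  if_pos h

lemma evCat_ge {A : ℕ → V} {m : ℕ} {B : ℕ → V} (hAB : A m = B 0) {i : ℕ} (h : m ≤ i) :
    evCat A m B i = B (i - m) := by
  rcases eq_or_lt_of_le h with rfl | h'
  · simpa [evCat] using hAB
  · exact if_neg (by omega)

lemma isEvol_evCat {A : ℕ → V} {m : ℕ} {B : ℕ → V} {n : ℕ}
    (hA : IsEvol A m) (hB : IsEvol B n) (hAB : A m = B 0) :
    IsEvol (evCat A m B) (m + n) := by
  intro k hk
  by_cases h1 : k + 1 ≤ m
  · rw [evCat_le h1, evCat_le (by omega)]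
    exact hA k (by omega)
  · rw [evCat_ge hAB (by omega), evCat_ge hAB (by omega)]
    have : k + 1 - m = (k - m) + 1 := by omega
    rw [this]
    exact hB (k - m) (by omega)

lemma height_le_of_full {X : V} {A : ℕ → V} {m : ℕ} (h : IsFullEvol A m X) :
    height X ≤ (m : ℕ∞) := by
  apply sInf_le
  exact ⟨m, rfl, A, h⟩

lemma height_attained {X : V} (h : ∃ (A : ℕ → V) (m : ℕ), IsFullEvol A m X) :
    ∃ (n : ℕ) (A : ℕ → V), height X = (n : ℕ∞) ∧ IsFullEvol A n X := by
  obtain ⟨A0, m0, h0⟩ := h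
  have hS : {m | ∃ A : ℕ → V, IsFullEvol A m X}.Nonempty := ⟨m0, A0, h0⟩
  obtain ⟨A1, h1⟩ := Nat.sInf_mem hS
  refine ⟨_, A1, ?_, h1⟩
  refine le_antisymm (height_le_of_full h1) ?_
  apply le_sInf
  rintro x ⟨m, rfl, A2, h2⟩
  have hm : m ∈ {m | ∃ A : ℕ → V, IsFullEvol A m X} := ⟨A2, h2⟩
  exact_mod_cast Nat.sInf_le hm

lemma height_evol_le (hmon : Monotonous V) {A : ℕ → V} :
    ∀ m : ℕ, IsEvol A m → height (A 0) ≤ height (A m) := by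
  intro m
  induction m with
  | zero => intro _; exact le_refl _
  | succ n ih =>
    intro h
    exact (ih (isEvol_prefix h (Nat.le_succ n))).trans (hmon _ _ (h n (Nat.lt_succ_self n)))

lemma height_anc_le (hmon : Monotonous V) {X Y : V} (h : Anc X Y) : height X ≤ height Y := by
  obtain ⟨m, A, hE, h0, hm⟩ := h
  subst h0; subst hm
  exact height_evol_le hmon m hE

lemma height_isotypic (hmon : Monotonous V) {X Y : V} (h : Isotypic X Y) :
    height X = height Y :=
  le_antisymm (height_anc_le hmon h.1) (height_anc_le hmon h.2)

lemma anc_trans {X Y Z : V} (h1 : Anc X Y) (h2 : Anc Y Z) : Anc X Z := by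
  obtain ⟨m, A1, hE1, e10, e1m⟩ := h1
  obtain ⟨n, A2, hE2, e20, e2n⟩ := h2
  refine ⟨m + n, evCat A1 m A2, isEvol_evCat hE1 hE2 (e1m.trans e20.symm), ?_, ?_⟩
  · rw [evCat_le (Nat.zero_le m)]; exact e10
  · rw [evCat_ge (e1m.trans e20.symm) (Nat.le_add_right m n)]
    simpa using e2n

lemma height_index (hmon : Monotonous V) {X : V} {E : ℕ → V} {m : ℕ}
    (hF : IsFullEvol E m X) (hshort : height X = (m : ℕ∞)) :
    ∀ k ≤ m, height (E k) = (k : ℕ∞) := by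
  intro k hk
  have hpre : IsFullEvol E k (E k) := ⟨isEvol_prefix hF.1 hk, hF.2.1, rfl⟩
  refine le_antisymm (height_le_of_full hpre) ?_
  obtain ⟨n, F, hn, hFn⟩ := height_attained ⟨E, k, hpre⟩
  -- concatenate F with the tail of E from k to m
  have htail : IsEvol (fun i => E (k + i)) (m - k) := by
    intro j hj
    exact hF.1 (k + j) (by omega)
  have hjun : F n = (fun i => E (k + i)) 0 := by simpa using hFn.2.2
  have hfull : IsFullEvol (evCat F n (fun i => E (k + i))) (n + (m - k)) X := by
    refine ⟨isEvol_evCat hFn.1 htail hjun, ?_, ?_⟩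
    · rw [evCat_le (Nat.zero_le n)]; exact hFn.2.1
    · rw [evCat_ge hjun (Nat.le_add_right _ _)]
      have : k + (n + (m - k) - n) = m := by omega
      rw [this]; exact hF.2.2
  have := height_le_of_full hfull
  rw [hshort] at this
  have hmn : m ≤ n + (m - k) := by exact_mod_cast this
  rw [hn]
  exact_mod_cast (by omega : k ≤ n)

lemma strict_ge {r : ℕ → ℕ} {m : ℕ} (h : ∀ k < m, r k < r (k + 1)) :
    ∀ j ≤ m, ∀ i ≤ j, r i + (j - i) ≤ r j := by
  intro j
  induction j with
  | zero => intro _ i hi; interval_cases i; omega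
  | succ p ih =>
    intro hj i hi
    rcases eq_or_lt_of_le hi with rfl | h'
    · omega
    · have := ih (by omega) i (by omega)
      have := h p (by omega)
      omega

end AuxLemmas
set_option linter.unusedSectionVars false in
lemma primitive_height_zero {X : V} (h : Primitive X) : height X = 0 := by
  have h0 : IsFullEvol (fun _ => X) 0 X :=
    ⟨fun k hk => absurd hk (Nat.not_lt_zero k), h, rfl⟩
  simpa using le_antisymm (by simpa using height_le_of_full h0) zero_le

section CladeLemmas
set_option linter.unusedSectionVars false
variable {V : Type u} [Quiver V] {A : V}

lemma anc_val {X Y : Clade A} (h : Anc X Y) : Anc X.val Y.val := by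
  obtain ⟨m, E, hE, h0, hm⟩ := h
  exact ⟨m, fun k => (E k).val, fun k hk => hE k hk, by show (E 0).val = X.val; rw [h0], by show (E m).val = Y.val; rw [hm]⟩

lemma anc_clade {X Y : Clade A} (h : Anc X.val Y.val) : Anc X Y := by
  obtain ⟨m, E, hE, h0, hm⟩ := h
  have hin : ∀ k, Anc A (E (min k m)) := by
    intro k
    refine anc_trans ?_ (anc_segment hE (Nat.zero_le _) (min_le_right k m))
    rw [h0]; exact X.2
  refine ⟨m, fun k => ⟨E (min k m), hin k⟩, ?_, ?_, ?_⟩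
  · intro k hk
    show Nonempty (E (min (k + 1) m) ⟶ E (min k m))
    rw [min_eq_left (by omega : k + 1 ≤ m), min_eq_left (by omega : k ≤ m)]
    exact hE k hk
  · apply Subtype.ext
    show E (min 0 m) = X.val
    rw [Nat.min_eq_left (Nat.zero_le m)]; exact h0
  · apply Subtype.ext
    show E (min m m) = Y.val
    rw [min_self]; exact hm

lemma isotypic_clade {X Y : Clade A} (h : Isotypic X.val Y.val) : Isotypic X Y :=
  ⟨anc_clade h.1, anc_clade h.2⟩

lemma primitive_clade (C : Clade A) : Primitive C ↔ Anc C.val A := by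
  constructor
  · intro h
    exact anc_val (X := C) (Y := ⟨A, anc_refl A⟩) (h ⟨A, anc_refl A⟩ (anc_clade C.2))
  · intro h D _
    exact anc_clade (anc_trans h D.2)

end CladeLemmas
theorem stmt_18 (hmon : Monotonous V) (hphy : ∀ X : V, Phylogenetic X)
    (A : V) (hA : Regular A) :
    Monotonous (Clade A) ∧ ∀ B : Clade A, Phylogenetic B := by
  classical
  choose U M hU using hphy
  have hMfull : ∀ X : V, IsFullEvol (U X) (M X) X := fun X => (hU X).1
  have hheight : ∀ X : V, height X = (M X : ℕ∞) := by
    intro X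
    obtain ⟨n, F, hn, hF⟩ := height_attained ⟨U X, M X, hMfull X⟩
    have h1 : M X ≤ n := ((hU X).2 F n hF).1
    have h2 : height X ≤ (M X : ℕ∞) := height_le_of_full (hMfull X)
    rw [hn] at h2 ⊢
    have h2' : n ≤ M X := by exact_mod_cast h2
    congr 1
    omega
  have hUk : ∀ X : V, ∀ k ≤ M X, height (U X k) = (k : ℕ∞) := by
    intro X
    exact height_index hmon (hMfull X) (hheight X)
  set a := M A with ha
  -- Key lemma K1 : the tail of the universal evolution lies in the clade
  have hUA : ∀ B : V, Anc A B → a ≤ M B ∧ ∀ k, a ≤ k → k ≤ M B → Anc A (U B k) := by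
    intro B hAB
    have ham : a ≤ M B := by
      have := height_anc_le hmon hAB
      rw [hheight A, hheight B] at this
      exact_mod_cast this
    refine ⟨ham, ?_⟩
    obtain ⟨ℓ, D, hD, hD0, hDl⟩ := hAB
    have hjun : U A a = D 0 := by rw [(hMfull A).2.2, hD0]
    have hFfull : IsFullEvol (evCat (U A) a D) (a + ℓ) B := by
      refine ⟨isEvol_evCat (hMfull A).1 hD hjun, ?_, ?_⟩
      · rw [evCat_le (Nat.zero_le a)]; exact (hMfull A).2.1
      · rw [evCat_ge hjun (Nat.le_add_right a ℓ)]
        have : a + ℓ - a = ℓ := by omega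
        rw [this]; exact hDl
    obtain ⟨hmn, r, hr1, hr2, hr3⟩ := (hU B).2 _ _ hFfull
    have hrge : ∀ k ≤ M B, k ≤ r k := by
      intro k hk
      have := strict_ge hr1 k hk 0 (Nat.zero_le k)
      omega
    have hrub : ∀ k ≤ M B, r k ≤ a + ℓ := by
      intro k hk
      have := strict_ge hr1 (M B) (le_refl _) k hk
      omega
    intro k hka hkm
    have hiso := hr3 k hkm
    rcases le_or_gt (r k) a with h1 | h1
    · have hrka : r k = a := by have := hrge k hkm; omega
      have : evCat (U A) a D (r k) = A := by
        rw [hrka, evCat_le (le_refl a)]; exact (hMfull A).2.2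
      rw [this] at hiso
      exact hiso.2
    · have : evCat (U A) a D (r k) = D (r k - a) := evCat_ge hjun (by omega)
      rw [this] at hiso
      have hADj : Anc A (D (r k - a)) := by
        rw [← hD0]
        exact anc_segment hD (Nat.zero_le _) (by have := hrub k hkm; omega)
      exact anc_trans hADj hiso.2
  have emb : ∀ (B : Clade A) (G : ℕ → Clade A) (n : ℕ), IsFullEvol G n B →
      ∃ r : ℕ → ℕ, (∀ k < M B.val, r k < r (k+1)) ∧ r (M B.val) ≤ a + n ∧
        (∀ k ≤ M B.val, a ≤ r k → Isotypic (U B.val k) (G (r k - a)).val) ∧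
        (∀ k ≤ M B.val, k ≤ r k) ∧ M B.val ≤ a + n := by
    intro B G n hG
    have hG0A : Anc (G 0).val A := (primitive_clade (G 0)).1 hG.2.1
    have hMG0 : M (G 0).val = a := by
      have h0 : height ((G 0).val) = (a : ℕ∞) := by
        rw [height_isotypic hmon ⟨hG0A, (G 0).2⟩, hheight A]
      have := (hheight (G 0).val).symm.trans h0
      exact_mod_cast this
    have hGval : IsEvol (fun i => (G i).val) n := fun k hk => hG.1 k hk
    have hjun : U (G 0).val (M (G 0).val) = (fun i => (G i).val) 0 := (hMfull _).2.2
    have hFfull : IsFullEvol (evCat (U (G 0).val) (M (G 0).val) (fun i => (G i).val))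
        (M (G 0).val + n) B.val := by
      refine ⟨isEvol_evCat (hMfull _).1 hGval hjun, ?_, ?_⟩
      · rw [evCat_le (Nat.zero_le _)]; exact (hMfull _).2.1
      · rw [evCat_ge hjun (Nat.le_add_right _ _)]
        have h2 : M (G 0).val + n - M (G 0).val = n := by omega
        rw [h2]
        show (G n).val = B.val
        rw [hG.2.2]
    obtain ⟨hmn, r, hr1, hr2, hr3⟩ := (hU B.val).2 _ _ hFfull
    rw [hMG0] at hmn hr2
    refine ⟨r, hr1, hr2, ?_, ?_, hmn⟩
    · intro k hk hak
      have hiso := hr3 k hk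
      have heq := evCat_ge (A := U (G 0).val) (m := M (G 0).val)
        (B := fun i => (G i).val) hjun (i := r k) (by omega)
      rw [heq] at hiso
      simp only [hMG0] at hiso
      exact hiso
    · intro k hk
      have := strict_ge hr1 k hk 0 (Nat.zero_le k); omega
  have hom_clade : ∀ {X Y : Clade A}, Nonempty (X.val ⟶ Y.val) → Nonempty (X ⟶ Y) :=
    fun h => h
  have key : ∀ B : Clade A, ∃ W : ℕ → Clade A,
      IsUniversalEvol W (M B.val - a + (if Anc (U B.val a) A then 0 else 1)) B := by
    intro B
    obtain ⟨ham, hanc⟩ := hUA B.val B.2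
    by_cases hP : Anc (U B.val a) A
    · rw [if_pos hP, Nat.add_zero]
      obtain ⟨W, hWs⟩ : ∃ W : ℕ → Clade A,
          ∀ k, (W k).val = U B.val (min (a + k) (M B.val)) := by
        refine ⟨fun k => ⟨U B.val (min (a + k) (M B.val)),
          hanc _ (le_min (Nat.le_add_right a k) ham) (min_le_right _ _)⟩, fun k => rfl⟩
      refine ⟨W, ⟨⟨?_, ?_, ?_⟩, ?_⟩⟩
      · intro k hk
        apply hom_clade
        rw [hWs, hWs, min_eq_left (by omega : a + (k + 1) ≤ M B.val),
          min_eq_left (by omega : a + k ≤ M B.val)]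
        exact (hMfull B.val).1 (a + k) (by omega)
      · apply (primitive_clade _).2
        rw [hWs, min_eq_left (by omega : a + 0 ≤ M B.val)]
        simpa using hP
      · apply Subtype.ext
        rw [hWs, min_eq_left (by omega : a + (M B.val - a) ≤ M B.val),
          (by omega : a + (M B.val - a) = M B.val)]
        exact (hMfull B.val).2.2
      · intro G n hG
        obtain ⟨r, hr1, hr2, hr3, hr4, hr5⟩ := emb B G n hG
        refine ⟨by omega, fun k => r (a + k) - a, ?_, ?_, ?_⟩
        · intro k hk
          show r (a + k) - a < r (a + (k + 1)) - a
          have h1 := hr1 (a + k) (by omega)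
          have h2 := hr4 (a + k) (by omega)
          have h3 : r (a + (k + 1)) = r (a + k + 1) := rfl
          omega
        · show r (a + (M B.val - a)) - a ≤ n
          rw [(by omega : a + (M B.val - a) = M B.val)]
          omega
        · intro k hk
          apply isotypic_clade
          rw [hWs, min_eq_left (by omega : a + k ≤ M B.val)]
          exact hr3 (a + k) (by omega) (by have := hr4 (a + k) (by omega); omega)
    · rw [if_neg hP]
      obtain ⟨W, hW0, hWs⟩ : ∃ W : ℕ → Clade A, (W 0).val = A ∧
          ∀ k, k ≠ 0 → (W k).val = U B.val (min (a + k - 1) (M B.val)) := by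
        refine ⟨fun k => if h : k = 0 then ⟨A, anc_refl A⟩ else
          ⟨U B.val (min (a + k - 1) (M B.val)),
            hanc _ (le_min (by omega) ham) (min_le_right _ _)⟩, rfl, ?_⟩
        intro k hk
        simp only [dif_neg hk]
      refine ⟨W, ⟨⟨?_, ?_, ?_⟩, ?_⟩⟩
      · intro k hk
        apply hom_clade
        by_cases h0 : k = 0
        · subst h0
          rw [hWs 1 one_ne_zero, hW0, (by omega : a + 1 - 1 = a), min_eq_left ham]
          exact hA (U B.val a) (hanc a le_rfl ham)
            (by rw [hUk B.val a ham, hheight A])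
        · rw [hWs (k + 1) (by omega), hWs k h0,
            min_eq_left (by omega : a + (k + 1) - 1 ≤ M B.val),
            min_eq_left (by omega : a + k - 1 ≤ M B.val),
            (by omega : a + (k + 1) - 1 = a + k - 1 + 1)]
          exact (hMfull B.val).1 (a + k - 1) (by omega)
      · apply (primitive_clade _).2
        rw [hW0]
        exact anc_refl A
      · apply Subtype.ext
        rw [hWs _ (by omega : M B.val - a + 1 ≠ 0),
          (by omega : a + (M B.val - a + 1) - 1 = a + (M B.val - a)),
          min_eq_left (by omega : a + (M B.val - a) ≤ M B.val),
          (by omega : a + (M B.val - a) = M B.val)]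
        exact (hMfull B.val).2.2
      · intro G n hG
        obtain ⟨r, hr1, hr2, hr3, hr4, hr5⟩ := emb B G n hG
        have hra : a < r a := by
          rcases eq_or_lt_of_le (hr4 a ham) with he | h
          · exfalso
            have hiso := hr3 a ham (le_of_eq he)
            rw [(by omega : r a - a = 0)] at hiso
            exact hP (anc_trans hiso.1 ((primitive_clade (G 0)).1 hG.2.1))
          · exact h
        set s : ℕ → ℕ := fun k => if k = 0 then 0 else r (a + k - 1) - a with hsdef
        have hs0 : s 0 = 0 := rfl
        have hsk : ∀ k, k ≠ 0 → s k = r (a + k - 1) - a := by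
          intro k hk; simp only [hsdef, if_neg hk]
        have hs1 : ∀ k < M B.val - a + 1, s k < s (k + 1) := by
          intro k hk
          by_cases h0 : k = 0
          · subst h0
            rw [hs0, hsk 1 one_ne_zero, (by omega : a + 1 - 1 = a)]
            omega
          · rw [hsk k h0, hsk (k + 1) (by omega),
              (by omega : a + (k + 1) - 1 = a + k - 1 + 1)]
            have h1 := hr1 (a + k - 1) (by omega)
            have h2 := hr4 (a + k - 1) (by omega)
            omega
        have hs2 : s (M B.val - a + 1) ≤ n := by
          rw [hsk _ (by omega : M B.val - a + 1 ≠ 0),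
            (by omega : a + (M B.val - a + 1) - 1 = M B.val)]
          omega
        have hslen : M B.val - a + 1 ≤ n := by
          have := strict_ge hs1 (M B.val - a + 1) le_rfl 0 (Nat.zero_le _)
          rw [hs0] at this
          omega
        refine ⟨hslen, s, hs1, hs2, ?_⟩
        intro k hk
        apply isotypic_clade
        by_cases h0 : k = 0
        · subst h0
          rw [hW0, hs0]
          exact ⟨(G 0).2, (primitive_clade (G 0)).1 hG.2.1⟩
        · rw [hWs k h0, hsk k h0, min_eq_left (by omega : a + k - 1 ≤ M B.val)]
          exact hr3 (a + k - 1) (by omega)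
            (by have := hr4 (a + k - 1) (by omega); omega)
  have hc : ∀ B : Clade A, height B =
      ((M B.val - a + (if Anc (U B.val a) A then 0 else 1) : ℕ) : ℕ∞) := by
    intro B
    obtain ⟨W, hW⟩ := key B
    have h1 := height_le_of_full hW.1
    obtain ⟨n, G, hn, hG⟩ := height_attained ⟨W, _, hW.1⟩
    have h2 := (hW.2 G n hG).1
    rw [hn] at h1 ⊢
    have h1' : n ≤ M B.val - a + (if Anc (U B.val a) A then 0 else 1) := by
      exact_mod_cast h1
    congr 1
    omega
  constructor
  · intro P Q hPQ
    have hVedge : Nonempty (P.val ⟶ Q.val) := hPQ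
    have h1 : height Q.val ≤ height P.val := hmon _ _ hVedge
    rw [hheight, hheight] at h1
    have hMQP : M Q.val ≤ M P.val := by exact_mod_cast h1
    have haP : a ≤ M P.val := (hUA P.val P.2).1
    have haQ : a ≤ M Q.val := (hUA Q.val Q.2).1
    rw [hc P, hc Q, Nat.cast_le]
    have himp : M Q.val = M P.val → Anc (U P.val a) A → Anc (U Q.val a) A := by
      intro hMeq hPX
      rcases eq_or_lt_of_le haP with haeq | halt
      · have hQv : U Q.val a = Q.val := by
          rw [show a = M Q.val by omega]; exact (hMfull Q.val).2.2
        have hPv : U P.val a = P.val := by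
          rw [haeq]; exact (hMfull P.val).2.2
        rw [hPv] at hPX
        rw [hQv]
        exact anc_trans (anc_of_hom hVedge) hPX
      · have hD : IsEvol (fun i : ℕ => if i = 0 then Q.val else P.val) 1 := by
          intro k hk
          interval_cases k
          simpa using hVedge
        have hjun : U Q.val (M Q.val) = (fun i : ℕ => if i = 0 then Q.val else P.val) 0 := by
          simpa using (hMfull Q.val).2.2
        have hFfull : IsFullEvol
            (evCat (U Q.val) (M Q.val) (fun i : ℕ => if i = 0 then Q.val else P.val))
            (M Q.val + 1) P.val := by
          refine ⟨isEvol_evCat (hMfull Q.val).1 hD hjun, ?_, ?_⟩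
          · rw [evCat_le (Nat.zero_le _)]; exact (hMfull Q.val).2.1
          · rw [evCat_ge hjun (Nat.le_add_right _ _)]
            simp
        obtain ⟨hmn, r, hr1, hr2, hr3⟩ := (hU P.val).2 _ _ hFfull
        have hge : a ≤ r a := by
          have := strict_ge hr1 a haP 0 (Nat.zero_le a); omega
        have hub : r a + (M P.val - a) ≤ r (M P.val) :=
          strict_ge hr1 (M P.val) le_rfl a haP
        have hra : r a = a ∨ r a = a + 1 := by omega
        rcases hra with h | h
        · have hiso := hr3 a haP
          rw [h, evCat_le haQ] at hiso
          exact anc_trans hiso.2 hPX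
        · have hiso := hr3 a haP
          rw [h, evCat_le (by omega : a + 1 ≤ M Q.val)] at hiso
          exfalso
          have e1 : height (U P.val a) = (a : ℕ∞) := hUk P.val a haP
          have e2 : height (U Q.val (a + 1)) = ((a + 1 : ℕ) : ℕ∞) :=
            hUk Q.val (a + 1) (by omega)
          have e3 := height_isotypic hmon hiso
          rw [e1, e2] at e3
          have : a = a + 1 := by exact_mod_cast e3
          omega
    by_cases hQa : Anc (U Q.val a) A
    · rw [if_pos hQa]
      split_ifs <;> omega
    · rw [if_neg hQa]
      split_ifs with hPa
      · rcases eq_or_lt_of_le hMQP with he | hl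
        · exact absurd (himp he hPa) hQa
        · omega
      · omega
  · intro B
    obtain ⟨W, hW⟩ := key B
    exact ⟨W, _, hW⟩
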